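/- Let I, J be index sets, and let (u_i)_{i∈I}, (v_j)_{j∈J} be vectors in ℝ^d with ⟨u_i, v_j⟩ ≤ 1 for all i, j, and span(v_j : j ∈ J) = ℝ^d. Suppose there exist r×r symmetric positive semidefinite matrices U_i (i ∈ I) and V_j (j ∈ J) with 1 − ⟨u_i, v_j⟩ = ⟨U_i, V_j⟩ for all i, j, where ⟨·,·⟩ on matrices is the trace inner product. Then there exists a convex set C ⊆ ℝ^d which is the image under an affine map of the intersection of an affine subspace of r×r symmetric matrices with the PSD cone, such that u_i ∈ C for all i ∈ I and ⟨x, v_j⟩ ≤ 1 for all x ∈ C and all j ∈ J. -/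

import Mathlib

lemma psd_inner_nonneg {r : ℕ} {M N : Matrix (Fin r) (Fin r) ℝ}
    (hM : M.PosSemidef) (hN : N.PosSemidef) :
    0 ≤ ∑ a, ∑ b, M a b * N a b := by
  classical
  have hNs : ∀ a b, N b a = N a b := by
    intro a b
    have h := hN.1
    have := congrFun (congrFun h a) b
    simpa [Matrix.conjTranspose_apply] using this
  have htr : ∑ a, ∑ b, M a b * N a b = Matrix.trace (M * N) := by
    simp only [Matrix.trace, Matrix.diag, Matrix.mul_apply]
    exact Finset.sum_congr rfl fun a _ => Finset.sum_congr rfl fun b _ => by rw [hNs]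
  rw [htr]
  set S := (open scoped MatrixOrder in CFC.sqrt M) with hSdef
  have hS : S * S = M := by open scoped MatrixOrder in exact CFC.sqrt_mul_sqrt_self M hM.nonneg
  have hSherm : S.conjTranspose = S := by
    open scoped MatrixOrder in simpa [Matrix.IsHermitian] using (CFC.sqrt_nonneg M).1
  have hpsd : (S * N * S).PosSemidef := by
    have h := hN.conjTranspose_mul_mul_same S
    rw [hSherm] at h
    exact h
  have hcyc : Matrix.trace (M * N) = Matrix.trace (S * N * S) := by
    rw [← hS, Matrix.trace_mul_cycle S N S]
  rw [hcyc]
  have hdiag : ∀ a, 0 ≤ (S * N * S) a a := by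
    intro a
    have h := hpsd.dotProduct_mulVec_nonneg (Pi.single a 1)
    simpa [dotProduct, Matrix.mulVec, Pi.single_apply, Finset.mul_sum,
      mul_ite, ite_mul] using h
  exact Finset.sum_nonneg fun a _ => hdiag a

lemma psd_convex {r : ℕ} : Convex ℝ {M : Matrix (Fin r) (Fin r) ℝ | M.PosSemidef} := by
  intro M hM N hN a b ha hb hab
  refine Matrix.PosSemidef.of_dotProduct_mulVec_nonneg ?_ ?_
  · have h1 : (M : Matrix (Fin r) (Fin r) ℝ).IsHermitian := hM.1
    have h2 : (N : Matrix (Fin r) (Fin r) ℝ).IsHermitian := hN.1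
    unfold Matrix.IsHermitian at *
    rw [Matrix.conjTranspose_add, Matrix.conjTranspose_smul, Matrix.conjTranspose_smul, h1, h2]
    simp
  · intro x
    have hMx := hM.dotProduct_mulVec_nonneg x
    have hNx := hN.dotProduct_mulVec_nonneg x
    simp only [Matrix.add_mulVec, Matrix.smul_mulVec, dotProduct_add,
      dotProduct_smul, smul_eq_mul] at *
    have := add_nonneg (mul_nonneg ha hMx) (mul_nonneg hb hNx)
    simpa using this

theorem stmt6 {d r : ℕ} {I J : Type*} (u : I → (Fin d → ℝ)) (v : J → (Fin d → ℝ))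
    (h1 : ∀ i j, ∑ t, u i t * v j t ≤ 1)
    (hspan : Submodule.span ℝ (Set.range v) = ⊤)
    (U : I → Matrix (Fin r) (Fin r) ℝ) (V : J → Matrix (Fin r) (Fin r) ℝ)
    (hU : ∀ i, (U i).PosSemidef) (hV : ∀ j, (V j).PosSemidef)
    (hfac : ∀ i j, 1 - ∑ t, u i t * v j t = ∑ a, ∑ b, U i a b * V j a b) :
    ∃ C : Set (Fin d → ℝ), Convex ℝ C ∧
      (∃ (A : AffineSubspace ℝ (Matrix (Fin r) (Fin r) ℝ))
         (T : Matrix (Fin r) (Fin r) ℝ →ᵃ[ℝ] (Fin d → ℝ)),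
         C = T '' ((A : Set (Matrix (Fin r) (Fin r) ℝ)) ∩ {M | M.PosSemidef})) ∧
      (∀ i, u i ∈ C) ∧ (∀ x ∈ C, ∀ j, ∑ t, x t * v j t ≤ 1) := by
  classical
  -- evaluation map ℝ^d → ℝ^J
  set ev : (Fin d → ℝ) →ₗ[ℝ] (J → ℝ) :=
    { toFun := fun x j => ∑ t, x t * v j t
      map_add' := by
        intro x y; funext j
        simp [add_mul, Finset.sum_add_distrib]
      map_smul' := by
        intro c x; funext j
        simp [mul_assoc, Finset.mul_sum] } with hev
  have hev_inj : LinearMap.ker ev = ⊥ := by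
    rw [LinearMap.ker_eq_bot']
    intro x hx
    -- the functional y ↦ ∑ x t * y t vanishes on range v hence on ⊤
    have hfun : ∀ y : Fin d → ℝ, ∑ t, x t * y t = 0 := by
      let f : (Fin d → ℝ) →ₗ[ℝ] ℝ :=
        { toFun := fun y => ∑ t, x t * y t
          map_add' := by intro a b; simp [mul_add, Finset.sum_add_distrib]
          map_smul' := by intro c a; simp [Finset.mul_sum]; ring_nf; simp [mul_comm, mul_left_comm] }
      intro y
      have hy : y ∈ Submodule.span ℝ (Set.range v) := hspan ▸ Submodule.mem_top
      have h0 : ∀ z ∈ Set.range v, f z = 0 := by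
        rintro z ⟨j, rfl⟩
        have := congrFun hx j
        simpa [f, ev] using this
      have : Submodule.span ℝ (Set.range v) ≤ LinearMap.ker f := by
        rw [Submodule.span_le]
        intro z hz; exact h0 z hz
      exact this hy
    have hx0 : ∑ t, x t * x t = 0 := hfun x
    funext t
    have := (Finset.sum_eq_zero_iff_of_nonneg (fun s _ => mul_self_nonneg (x s))).mp hx0 t
      (Finset.mem_univ t)
    exact mul_self_eq_zero.mp this
  obtain ⟨P, hP⟩ := ev.exists_leftInverse_of_injective hev_inj
  -- affine map g : Matrix → ℝ^J, g M j = 1 - ⟨M, V j⟩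
  set L : Matrix (Fin r) (Fin r) ℝ →ₗ[ℝ] (J → ℝ) :=
    { toFun := fun M j => -(∑ a, ∑ b, M a b * V j a b)
      map_add' := by
        intro M N; funext j
        simp [add_mul, Finset.sum_add_distrib]; ring
      map_smul' := by
        intro c M; funext j
        simp [Finset.mul_sum, mul_assoc] } with hL
  set g : Matrix (Fin r) (Fin r) ℝ →ᵃ[ℝ] (J → ℝ) :=
    { toFun := fun M => (fun _ => (1 : ℝ)) + L M
      linear := L
      map_vadd' := by
        intro p m
        simp only [vadd_eq_add, map_add]
        abel } with hg
  have hgval : ∀ M j, g M j = 1 - ∑ a, ∑ b, M a b * V j a b := by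
    intro M j; simp [g, L, sub_eq_add_neg]
  set A : AffineSubspace ℝ (Matrix (Fin r) (Fin r) ℝ) :=
    AffineSubspace.comap g (LinearMap.range ev).toAffineSubspace with hA
  have hmemA : ∀ M, M ∈ A ↔ ∃ x, ev x = g M := by
    intro M
    constructor
    · intro h; exact h
    · intro h; exact h
  set T : Matrix (Fin r) (Fin r) ℝ →ᵃ[ℝ] (Fin d → ℝ) := P.toAffineMap.comp g with hT
  have hTval : ∀ M, M ∈ A → ev (T M) = g M := by
    intro M hM
    obtain ⟨x, hx⟩ := (hmemA M).mp hM
    have : T M = x := by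
      simp only [T, AffineMap.comp_apply, LinearMap.coe_toAffineMap, ← hx]
      exact congrFun (congrArg (·.toFun) hP) x
    rw [this, hx]
  refine ⟨T '' ((A : Set (Matrix (Fin r) (Fin r) ℝ)) ∩ {M | M.PosSemidef}), ?_, ⟨A, T, rfl⟩, ?_, ?_⟩
  · -- convexity
    apply Convex.affine_image
    apply Convex.inter
    · exact A.convex
    · exact psd_convex
  · -- u i ∈ C
    intro i
    refine ⟨U i, ⟨?_, hU i⟩, ?_⟩
    · refine (hmemA (U i)).mpr ⟨u i, ?_⟩
      funext j
      simp only [ev, LinearMap.coe_mk, AddHom.coe_mk]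
      rw [hgval]
      linarith [hfac i j]
    · -- T (U i) = u i
      have hmem : U i ∈ A := by
        refine (hmemA (U i)).mpr ⟨u i, ?_⟩
        funext j
        simp only [ev, LinearMap.coe_mk, AddHom.coe_mk]
        rw [hgval]
        linarith [hfac i j]
      have h1' := hTval (U i) hmem
      -- ev (T (U i)) = ev (u i), injectivity gives T (U i) = u i
      have h2 : ev (u i) = g (U i) := by
        funext j
        simp only [ev, LinearMap.coe_mk, AddHom.coe_mk]
        rw [hgval]
        linarith [hfac i j]
      have : ev (T (U i)) = ev (u i) := h1'.trans h2.symm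
      have hinj : Function.Injective ev := LinearMap.ker_eq_bot.mp hev_inj
      exact hinj this
  · -- constraint
    rintro x ⟨M, ⟨hMA, hMpsd⟩, rfl⟩ j
    have := hTval M hMA
    have h1' : ∑ t, T M t * v j t = 1 - ∑ a, ∑ b, M a b * V j a b := by
      have := congrFun this j
      simpa [ev, hgval] using this
    have h2 : 0 ≤ ∑ a, ∑ b, M a b * V j a b := psd_inner_nonneg hMpsd (hV j)
    linarith
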